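/- For every real number k > 0 and every fixed t ∈ ℝ, the chord-arc ratio of the logarithmic spiral tends to √(k² + 1)/k as the lower parameter tends to −∞: the function s ↦ (∫_s^t ‖φ'(r)‖ dr) / ‖φ(t) − φ(s)‖ tends to √(k² + 1)/k as s → −∞. -/

import Mathlib

open Real Filter

/-- For every `k > 0` and fixed `t`, the arc-length-to-chord ratio of the logarithmic
spiral `φ(s) = e^{ks} (cos s, sin s)` tends to `√(k² + 1)/k` as the lower parameter
tends to `−∞`. -/
theorem log_spiral_ratio_tendsto (k : ℝ) (hk : 0 < k)
    (φ : ℝ → EuclideanSpace ℝ (Fin 2))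
    (hφ : φ = fun s => (WithLp.equiv 2 (Fin 2 → ℝ)).symm
      ![Real.exp (k * s) * Real.cos s, Real.exp (k * s) * Real.sin s]) (t : ℝ) :
    Tendsto (fun s => (∫ r in s..t, ‖deriv φ r‖) / ‖φ t - φ s‖) atBot
      (nhds (Real.sqrt (k ^ 2 + 1) / k)) := by
  subst hφ
  set E := PiLp.continuousLinearEquiv 2 ℝ (fun _ : Fin 2 => ℝ) with hE
  -- derivative of exp (k * s)
  have hexp : ∀ s : ℝ, HasDerivAt (fun s : ℝ => Real.exp (k * s))
      (Real.exp (k * s) * k) s := by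
    intro s
    simpa using ((hasDerivAt_id s).const_mul k).exp
  -- the derivative of φ
  have hderiv : ∀ s : ℝ, HasDerivAt
      (fun s => (WithLp.equiv 2 (Fin 2 → ℝ)).symm
        ![Real.exp (k * s) * Real.cos s, Real.exp (k * s) * Real.sin s])
      ((WithLp.equiv 2 (Fin 2 → ℝ)).symm
        ![Real.exp (k * s) * (k * Real.cos s - Real.sin s),
          Real.exp (k * s) * (k * Real.sin s + Real.cos s)]) s := by
    intro s
    have hf : HasDerivAt (fun s : ℝ =>
        (![Real.exp (k * s) * Real.cos s, Real.exp (k * s) * Real.sin s] : Fin 2 → ℝ))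
        ![Real.exp (k * s) * (k * Real.cos s - Real.sin s),
          Real.exp (k * s) * (k * Real.sin s + Real.cos s)] s := by
      rw [hasDerivAt_pi]
      intro i
      fin_cases i <;> simp only [Matrix.cons_val_zero, Matrix.cons_val_one, Matrix.head_cons,
        Fin.mk_zero, Fin.mk_one]
      · have := (hexp s).mul (Real.hasDerivAt_cos s)
        exact this.congr_deriv (by ring)
      · have := (hexp s).mul (Real.hasDerivAt_sin s)
        exact this.congr_deriv (by ring)
    exact (E.symm.toContinuousLinearMap.hasFDerivAt.comp_hasDerivAt s hf)
  -- norm of the derivative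
  have hnormderiv : ∀ s : ℝ,
      ‖deriv (fun s => (WithLp.equiv 2 (Fin 2 → ℝ)).symm
        ![Real.exp (k * s) * Real.cos s, Real.exp (k * s) * Real.sin s]) s‖
      = Real.sqrt (k ^ 2 + 1) * Real.exp (k * s) := by
    intro s
    rw [(hderiv s).deriv, EuclideanSpace.norm_eq]
    have h1 : ∑ i : Fin 2, ‖((WithLp.equiv 2 (Fin 2 → ℝ)).symm
        ![Real.exp (k * s) * (k * Real.cos s - Real.sin s),
          Real.exp (k * s) * (k * Real.sin s + Real.cos s)]) i‖ ^ 2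
        = (k ^ 2 + 1) * Real.exp (k * s) ^ 2 := by
      simp only [Fin.sum_univ_two, WithLp.equiv_symm_apply, WithLp.ofLp_toLp, PiLp.toLp_apply, Matrix.cons_val_zero,
        Matrix.cons_val_one, Matrix.head_cons, Real.norm_eq_abs, sq_abs]
      have := Real.sin_sq_add_cos_sq s
      nlinarith [this]
    rw [h1, Real.sqrt_mul (by positivity), Real.sqrt_sq (Real.exp_pos _).le]
  -- norm of φ itself
  have hnormφ : ∀ s : ℝ,
      ‖(WithLp.equiv 2 (Fin 2 → ℝ)).symm
        ![Real.exp (k * s) * Real.cos s, Real.exp (k * s) * Real.sin s]‖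
      = Real.exp (k * s) := by
    intro s
    rw [EuclideanSpace.norm_eq]
    have h1 : ∑ i : Fin 2, ‖((WithLp.equiv 2 (Fin 2 → ℝ)).symm
        ![Real.exp (k * s) * Real.cos s, Real.exp (k * s) * Real.sin s]) i‖ ^ 2
        = Real.exp (k * s) ^ 2 := by
      simp only [Fin.sum_univ_two, WithLp.equiv_symm_apply, WithLp.ofLp_toLp, PiLp.toLp_apply, Matrix.cons_val_zero,
        Matrix.cons_val_one, Matrix.head_cons, Real.norm_eq_abs, sq_abs]
      have := Real.sin_sq_add_cos_sq s
      nlinarith [this]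
    rw [h1, Real.sqrt_sq (Real.exp_pos _).le]
  -- the arc length integral
  have hint : ∀ s : ℝ,
      (∫ r in s..t, ‖deriv (fun s => (WithLp.equiv 2 (Fin 2 → ℝ)).symm
        ![Real.exp (k * s) * Real.cos s, Real.exp (k * s) * Real.sin s]) r‖)
      = Real.sqrt (k ^ 2 + 1) * ((Real.exp (k * t) - Real.exp (k * s)) / k) := by
    intro s
    have : (∫ r in s..t, ‖deriv (fun s => (WithLp.equiv 2 (Fin 2 → ℝ)).symm
        ![Real.exp (k * s) * Real.cos s, Real.exp (k * s) * Real.sin s]) r‖)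
        = ∫ r in s..t, Real.sqrt (k ^ 2 + 1) * Real.exp (k * r) := by
      apply intervalIntegral.integral_congr
      intro r _
      exact hnormderiv r
    rw [this, intervalIntegral.integral_const_mul]
    congr 1
    have hanti : ∀ r ∈ Set.uIcc s t, HasDerivAt (fun r : ℝ => Real.exp (k * r) / k)
        (Real.exp (k * r)) r := by
      intro r _
      have := (hexp r).div_const k
      exact this.congr_deriv (mul_div_cancel_right₀ _ hk.ne')
    rw [intervalIntegral.integral_eq_sub_of_hasDerivAt hanti
      ((Real.continuous_exp.comp (continuous_const.mul continuous_id)).intervalIntegrable s t)]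
    field_simp
  -- limits
  have hexp0 : Tendsto (fun s : ℝ => Real.exp (k * s)) atBot (nhds 0) := by
    apply Real.tendsto_exp_atBot.comp
    exact Tendsto.const_mul_atBot hk tendsto_id
  have hφ0 : Tendsto (fun s : ℝ => (WithLp.equiv 2 (Fin 2 → ℝ)).symm
      ![Real.exp (k * s) * Real.cos s, Real.exp (k * s) * Real.sin s] : ℝ → EuclideanSpace ℝ (Fin 2))
      atBot (nhds 0) := by
    rw [tendsto_zero_iff_norm_tendsto_zero]
    simpa only [hnormφ] using hexp0
  have hchord : Tendsto (fun s : ℝ => ‖((WithLp.equiv 2 (Fin 2 → ℝ)).symm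
      ![Real.exp (k * t) * Real.cos t, Real.exp (k * t) * Real.sin t] : EuclideanSpace ℝ (Fin 2))
      - (WithLp.equiv 2 (Fin 2 → ℝ)).symm
      ![Real.exp (k * s) * Real.cos s, Real.exp (k * s) * Real.sin s]‖) atBot
      (nhds (Real.exp (k * t))) := by
    have := (Tendsto.sub (tendsto_const_nhds
      (x := ((WithLp.equiv 2 (Fin 2 → ℝ)).symm
        ![Real.exp (k * t) * Real.cos t, Real.exp (k * t) * Real.sin t]
        : EuclideanSpace ℝ (Fin 2)))) hφ0).norm
    simpa only [sub_zero, hnormφ t] using this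
  have hnum : Tendsto (fun s : ℝ =>
      Real.sqrt (k ^ 2 + 1) * ((Real.exp (k * t) - Real.exp (k * s)) / k)) atBot
      (nhds (Real.sqrt (k ^ 2 + 1) * ((Real.exp (k * t) - 0) / k))) :=
    tendsto_const_nhds.mul ((tendsto_const_nhds.sub hexp0).div_const k)
  have := hnum.div hchord (Real.exp_ne_zero _)
  have heq : Real.sqrt (k ^ 2 + 1) * ((Real.exp (k * t) - 0) / k) / Real.exp (k * t)
      = Real.sqrt (k ^ 2 + 1) / k := by
    rw [sub_zero]
    field_simp
  rw [heq] at this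
  simpa only [hint, Pi.div_def] using this
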